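/- In the PRST scheme, blocking descendants never increases an agent's share: if agent i removes Δ ≥ 0 of its descendants (so that |C_i| decreases by Δ, and for each ancestor j of i, |C_j| decreases by Δ while the sibling counts |C_{p_j}| − |C_j| are unchanged), then the new coefficient ω_i' satisfies ω_i' ≤ ω_i. -/
import Mathlib

lemma prst_aux_g (a A a' A' Δ : ℕ) (h1 : a + 1 ≤ A) (h2 : a' + 1 ≤ A')
    (h3 : a' + Δ = a) (h4 : A' + Δ = A) :
    0 ≤ ((a' : ℝ) + 1) / (A' : ℝ) - 1 / ((A' : ℝ) - (a' : ℝ)) ∧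
      ((a' : ℝ) + 1) / (A' : ℝ) - 1 / ((A' : ℝ) - (a' : ℝ)) ≤
        ((a : ℝ) + 1) / (A : ℝ) - 1 / ((A : ℝ) - (a : ℝ)) := by
  have hx : (0:ℝ) ≤ (a':ℝ) := Nat.cast_nonneg _
  have hy1 : (a':ℝ) + 1 ≤ (A':ℝ) := by exact_mod_cast h2
  have hy0 : (0:ℝ) < (A':ℝ) := by linarith
  have hd0 : (0:ℝ) < (A':ℝ) - (a':ℝ) := by linarith
  have hD : (0:ℝ) ≤ (Δ:ℝ) := Nat.cast_nonneg _
  have ha : (a:ℝ) = (a':ℝ) + (Δ:ℝ) := by exact_mod_cast (h3.symm)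
  have hA : (A:ℝ) = (A':ℝ) + (Δ:ℝ) := by exact_mod_cast (h4.symm)
  have hA0 : (0:ℝ) < (A:ℝ) := by rw [hA]; linarith
  have hdiff : (A:ℝ) - (a:ℝ) = (A':ℝ) - (a':ℝ) := by rw [ha, hA]; ring
  constructor
  · rw [sub_nonneg, div_le_div_iff₀ hd0 hy0]
    nlinarith
  · rw [hdiff]
    have : ((a':ℝ) + 1) / (A':ℝ) ≤ ((a:ℝ) + 1) / (A:ℝ) := by
      rw [div_le_div_iff₀ hy0 hA0, ha, hA]
      nlinarith
    linarith

/-- PRST: blocking descendants never increases an agent's share coefficient: ω_i' ≤ ω_i. -/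
theorem prst_blocking_decreases_share {V : Type*} (s : V) (p : V → V)
    (c c' : V → ℕ) (ω ω' Ω Ω' : V → ℝ) (α : ℝ) (hα0 : 0 < α) (hα1 : α < 1)
    (hroot : p s = s)
    (hΩs : Ω s = 1) (hΩ's : Ω' s = 1)
    (hcard : ∀ j, j ≠ s → c j + 1 ≤ c (p j))
    (hcard' : ∀ j, j ≠ s → c' j + 1 ≤ c' (p j))
    (hΩrec : ∀ j, j ≠ s → Ω j =
      Ω (p j) * (((c j : ℝ) + 1) / (c (p j) : ℝ) -
        1 / ((c (p j) : ℝ) - (c j : ℝ))) * (1 - α))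
    (hΩ'rec : ∀ j, j ≠ s → Ω' j =
      Ω' (p j) * (((c' j : ℝ) + 1) / (c' (p j) : ℝ) -
        1 / ((c' (p j) : ℝ) - (c' j : ℝ))) * (1 - α))
    (hωrec : ∀ j, j ≠ s → ω j =
      Ω (p j) * (1 / ((c (p j) : ℝ) - (c j : ℝ)) +
        (((c j : ℝ) + 1) / (c (p j) : ℝ) - 1 / ((c (p j) : ℝ) - (c j : ℝ))) * α))
    (hω'rec : ∀ j, j ≠ s → ω' j =
      Ω' (p j) * (1 / ((c' (p j) : ℝ) - (c' j : ℝ)) +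
        (((c' j : ℝ) + 1) / (c' (p j) : ℝ) - 1 / ((c' (p j) : ℝ) - (c' j : ℝ))) * α))
    (i : V) (Δ m : ℕ) (hm : 1 ≤ m)
    (hpath : p^[m] i = s)
    (hne : ∀ k, k < m → p^[k] i ≠ s)
    (hdrop : ∀ k, k ≤ m → c' (p^[k] i) + Δ = c (p^[k] i)) :
    ω' i ≤ ω i := by
  -- main induction: for d < m, Ω' at p^[m-d] i is nonneg and ≤ Ω there
  have key : ∀ d, d < m → 0 ≤ Ω' (p^[m - d] i) ∧ Ω' (p^[m - d] i) ≤ Ω (p^[m - d] i) := by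
    intro d
    induction d with
    | zero =>
      intro _
      simp only [Nat.sub_zero, hpath, hΩs, hΩ's]
      norm_num
    | succ d ih =>
      intro hdm
      have hdm' : d < m := Nat.lt_of_succ_lt hdm
      obtain ⟨ihn, ihle⟩ := ih hdm'
      set k := m - (d + 1) with hk
      have hk1 : k + 1 = m - d := by omega
      have hkm : k < m := by omega
      set j := p^[k] i with hj
      have hjs : j ≠ s := hne k hkm
      have hpj : p j = p^[m - d] i := by
        rw [hj, ← Function.iterate_succ_apply' p k i]
        congr 1
      have h3 : c' j + Δ = c j := hdrop k (le_of_lt hkm)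
      have h4 : c' (p j) + Δ = c (p j) := by
        rw [hpj]; exact hdrop (m - d) (by omega)
      obtain ⟨hg0, hgle⟩ := prst_aux_g (c j) (c (p j)) (c' j) (c' (p j)) Δ
        (hcard j hjs) (hcard' j hjs) h3 h4
      rw [← hpj] at ihn ihle
      have hΩpj0 : 0 ≤ Ω (p j) := le_trans ihn ihle
      have hα' : (0:ℝ) ≤ 1 - α := by linarith
      rw [hΩrec j hjs, hΩ'rec j hjs]
      constructor
      · exact mul_nonneg (mul_nonneg ihn hg0) hα'
      · apply mul_le_mul_of_nonneg_right _ hα'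
        exact mul_le_mul ihle hgle hg0 hΩpj0
  -- specialize at d = m - 1, so index is p^[1] i = p i
  have h1 : m - (m - 1) = 1 := by omega
  obtain ⟨hΩ'pi0, hΩpile⟩ := key (m - 1) (by omega)
  rw [h1] at hΩ'pi0 hΩpile
  simp only [Function.iterate_one] at hΩ'pi0 hΩpile
  have his : i ≠ s := by
    have := hne 0 (by omega)
    simpa using this
  have hpi : p i = p^[1] i := (Function.iterate_one p ▸ rfl)
  have h3 : c' i + Δ = c i := by simpa using hdrop 0 (by omega)
  have h4 : c' (p i) + Δ = c (p i) := by
    have := hdrop 1 (by omega)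
    simpa using this
  obtain ⟨hg0, hgle⟩ := prst_aux_g (c i) (c (p i)) (c' i) (c' (p i)) Δ
    (hcard i his) (hcard' i his) h3 h4
  -- the difference of counts is unchanged
  have hdiff : (c (p i) : ℝ) - (c i : ℝ) = (c' (p i) : ℝ) - (c' i : ℝ) := by
    have e3 : (c' i : ℝ) + (Δ:ℝ) = (c i : ℝ) := by exact_mod_cast h3
    have e4 : (c' (p i) : ℝ) + (Δ:ℝ) = (c (p i) : ℝ) := by exact_mod_cast h4
    linarith
  have hd0 : (0:ℝ) < (c' (p i) : ℝ) - (c' i : ℝ) := by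
    have := hcard' i his
    have : (c' i : ℝ) + 1 ≤ (c' (p i) : ℝ) := by exact_mod_cast this
    linarith
  have hΩ0 : 0 ≤ Ω (p i) := le_trans hΩ'pi0 hΩpile
  have hgle2 := hgle
  rw [hdiff] at hgle2
  have hF0 : 0 ≤ 1 / ((c' (p i) : ℝ) - (c' i : ℝ)) +
      (((c' i : ℝ) + 1) / (c' (p i) : ℝ) - 1 / ((c' (p i) : ℝ) - (c' i : ℝ))) * α := by
    have h1D : 0 < 1 / ((c' (p i) : ℝ) - (c' i : ℝ)) := by positivity
    nlinarith
  have hFle : 1 / ((c' (p i) : ℝ) - (c' i : ℝ)) +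
      (((c' i : ℝ) + 1) / (c' (p i) : ℝ) - 1 / ((c' (p i) : ℝ) - (c' i : ℝ))) * α ≤
      1 / ((c' (p i) : ℝ) - (c' i : ℝ)) +
      (((c i : ℝ) + 1) / (c (p i) : ℝ) - 1 / ((c' (p i) : ℝ) - (c' i : ℝ))) * α := by
    nlinarith [mul_le_mul_of_nonneg_right hgle2 hα0.le]
  rw [hωrec i his, hω'rec i his, hdiff]
  exact mul_le_mul hΩpile hFle hF0 hΩ0
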